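/- Let G = ⟨a,b | a^m = b^n⟩. If there is a surjective group homomorphism from G onto the Klein bottle group K = ⟨u,v | u² = v²⟩, then m and n are both even and are divisible by exactly the same powers of 2 (i.e., the 2-adic valuations of m and n are equal and positive). -/

import Mathlib

/-- The single defining relation `t a^m t⁻¹ a^{-n}` of the Baumslag-Solitar group
`BS(m,n)`, as a subset of the free group on `Bool` (with `false ↦ a`, `true ↦ t`). -/
abbrev bsRels (m n : ℤ) : Set (FreeGroup Bool) :=
  {FreeGroup.of true * (FreeGroup.of false) ^ m * (FreeGroup.of true)⁻¹ *
    ((FreeGroup.of false) ^ n)⁻¹}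

/-- The Baumslag-Solitar group `BS(m,n) = ⟨a, t ∣ t a^m t⁻¹ = a^n⟩`. -/
abbrev BS (m n : ℤ) := PresentedGroup (bsRels m n)

/-- The generator `a` of `BS(m,n)`. -/
def BS.a (m n : ℤ) : BS m n := PresentedGroup.of false

/-- The generator `t` of `BS(m,n)`. -/
def BS.t (m n : ℤ) : BS m n := PresentedGroup.of true

/-- The Klein bottle group `K = ⟨u, v ∣ u² = v²⟩` (`true ↦ u`, `false ↦ v`). -/
abbrev KB := PresentedGroup
  ({FreeGroup.of true ^ 2 * (FreeGroup.of false ^ 2)⁻¹} : Set (FreeGroup Bool))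

/-- The generator `u` of the Klein bottle group. -/
def KB.u : KB := PresentedGroup.of true

/-- The generator `v` of the Klein bottle group. -/
def KB.v : KB := PresentedGroup.of false
/-- The amalgam `⟨a, b ∣ a^m = b^n⟩` (`true ↦ a`, `false ↦ b`). -/
abbrev Amalgam (m n : ℤ) := PresentedGroup
  ({(FreeGroup.of true) ^ m * ((FreeGroup.of false) ^ n)⁻¹} : Set (FreeGroup Bool))

/-- The generator `a` of the amalgam `⟨a, b ∣ a^m = b^n⟩`. -/
def Amalgam.a (m n : ℤ) : Amalgam m n := PresentedGroup.of true

/-- The generator `b` of the amalgam `⟨a, b ∣ a^m = b^n⟩`. -/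
def Amalgam.b (m n : ℤ) : Amalgam m n := PresentedGroup.of false

namespace Stmt6Aux

open SemidirectProduct Multiplicative

noncomputable section

abbrev Mz := Multiplicative ℤ

/-- The inversion automorphism of `Multiplicative ℤ`. -/
def negAut : MulAut Mz := MulEquiv.inv Mz

@[simp] lemma negAut_apply (x : Mz) : negAut x = x⁻¹ := rfl

/-- The action of `Multiplicative ℤ` on `Multiplicative ℤ` by sign. -/
def phiK : Mz →* MulAut Mz := zpowersHom _ negAut

/-- Concrete model of the Klein bottle group: `ℤ ⋊ ℤ`. -/
abbrev K' := Mz ⋊[phiK] Mz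

lemma negAut_sq : negAut * negAut = 1 := by
  ext x
  simp

lemma phiK_apply (x : Mz) : phiK x = negAut ^ x.toAdd := rfl

lemma phiK_even {x : Mz} (h : Even x.toAdd) : phiK x = 1 := by
  obtain ⟨k, hk⟩ := h
  rw [phiK_apply, hk, ← two_mul, zpow_mul]
  have h2 : negAut ^ (2 : ℤ) = 1 := by
    rw [zpow_two]; exact negAut_sq
  rw [h2, one_zpow]

lemma phiK_odd {x : Mz} (h : Odd x.toAdd) : phiK x = negAut := by
  obtain ⟨k, hk⟩ := h
  have h2 : negAut ^ (2 : ℤ) = 1 := by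
    rw [zpow_two]; exact negAut_sq
  rw [phiK_apply, hk, zpow_add, zpow_mul, h2, one_zpow, zpow_one, one_mul]

lemma right_zpow (w : K') (k : ℤ) : (w ^ k).right = w.right ^ k :=
  map_zpow rightHom w k

/-- `inr` of an even element is central. -/
lemma inr_central {x : Mz} (he : Even x.toAdd) (w : K') :
    Commute (inr x : K') w := by
  have h1 : Commute (inr x : K') (inl w.left) := by
    show _ * _ = _ * _
    ext <;> simp [phiK_even he]
  have h2 : Commute (inr x : K') (inr w.right) := by
    show _ * _ = _ * _
    rw [← map_mul, ← map_mul, mul_comm]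
  have := h1.mul_right h2
  rwa [inl_left_mul_inr_right w] at this

lemma zpow_of_even_right {w : K'} (hc : Even w.right.toAdd) (k : ℤ) :
    w ^ k = inl (w.left ^ k) * inr (w.right ^ k) := by
  have hcom : Commute (inl w.left : K') (inr w.right) := by
    show _ * _ = _ * _
    ext <;> simp [phiK_even hc]
  conv_lhs => rw [← inl_left_mul_inr_right w]
  rw [hcom.mul_zpow, map_zpow, map_zpow]

lemma sq_of_odd_right {w : K'} (hc : Odd w.right.toAdd) :
    w ^ (2 : ℤ) = inr (w.right ^ (2 : ℤ)) := by
  ext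
  · rw [zpow_two, zpow_two]
    simp [phiK_odd hc]
  · rw [zpow_two, zpow_two]
    simp

lemma zpow_even_of_odd_right {w : K'} (hc : Odd w.right.toAdd) {e : ℤ} (he : Even e) :
    w ^ e = inr (w.right ^ e) := by
  obtain ⟨k, hk⟩ := he
  have hk2 : e = 2 * k := by omega
  calc w ^ e = (w ^ (2 : ℤ)) ^ k := by rw [← zpow_mul, ← hk2]
    _ = (inr (w.right ^ (2 : ℤ)) : K') ^ k := by rw [sq_of_odd_right hc]
    _ = inr (w.right ^ e) := by rw [← map_zpow, ← zpow_mul, ← hk2]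

lemma zpow_odd_left_of_odd_right {w : K'} (hc : Odd w.right.toAdd) {e : ℤ} (he : Odd e) :
    (w ^ e).left = w.left := by
  obtain ⟨k, hk⟩ := he
  have h1 : w ^ e = (w ^ (2 * k)) * w := by rw [← zpow_add_one, ← hk]
  have h2 : w ^ (2 * k) = inr (w.right ^ (2 * k)) :=
    zpow_even_of_odd_right hc ⟨k, by ring⟩
  have heven : Even ((w.right ^ (2 * k)).toAdd) := by
    rw [toAdd_zpow, smul_eq_mul]
    exact ⟨k * w.right.toAdd, by ring⟩
  rw [h1, h2, mul_left, left_inr, one_mul, right_inr, phiK_even heven, MulAut.one_apply]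

end

end Stmt6Aux

section Psi

open SemidirectProduct Multiplicative Stmt6Aux

/-- image of the generators of `KB` in the concrete model. -/
noncomputable def kgen : Bool → K' := fun b =>
  if b then inr (ofAdd 1) else ⟨ofAdd 1, ofAdd 1⟩

lemma kgen_rel : ∀ r ∈ ({FreeGroup.of true ^ 2 * (FreeGroup.of false ^ 2)⁻¹} :
    Set (FreeGroup Bool)), FreeGroup.lift kgen r = 1 := by
  intro r hr
  rw [Set.mem_singleton_iff] at hr
  subst hr
  rw [map_mul, map_inv, map_pow, map_pow, FreeGroup.lift_apply_of, FreeGroup.lift_apply_of]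
  rw [mul_inv_eq_one]
  show (kgen true) ^ 2 = (kgen false) ^ 2
  simp only [kgen, if_true, if_false]
  ext
  · rw [pow_two, pow_two]
    have hodd : Odd ((ofAdd (1:ℤ)).toAdd) := ⟨0, by simp⟩
    simp [phiK_odd hodd]
  · rw [pow_two, pow_two]
    simp

/-- The homomorphism from `KB` onto the concrete model. -/
noncomputable def psi : KB →* K' := PresentedGroup.toGroup kgen_rel

lemma psi_u : psi KB.u = inr (ofAdd 1) := PresentedGroup.toGroup.of kgen_rel

lemma psi_v : psi KB.v = ⟨ofAdd 1, ofAdd 1⟩ := PresentedGroup.toGroup.of kgen_rel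

lemma psi_surjective : Function.Surjective psi := by
  intro k
  refine ⟨(KB.v * KB.u⁻¹) ^ (k.left.toAdd) * KB.u ^ (k.right.toAdd), ?_⟩
  have hVU : psi KB.v * (psi KB.u)⁻¹ = inl (ofAdd 1) := by
    rw [psi_u, psi_v]
    ext <;> simp
  rw [map_mul, map_zpow, map_zpow, map_mul, map_inv, hVU, psi_u,
    ← map_zpow inl, ← map_zpow inr]
  have h1 : (ofAdd (1:ℤ)) ^ (k.left.toAdd) = k.left := by
    rw [← ofAdd_toAdd k.left]
    simp [← ofAdd_zsmul]
  have h2 : (ofAdd (1:ℤ)) ^ (k.right.toAdd) = k.right := by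
    rw [← ofAdd_toAdd k.right]
    simp [← ofAdd_zsmul]
  rw [h1, h2, inl_left_mul_inr_right]

end Psi

theorem stmt6 (m n : ℤ) (hm : m ≠ 0) (hn : n ≠ 0)
    (f : Amalgam m n →* KB) (hf : Function.Surjective f) :
    0 < padicValInt 2 m ∧ padicValInt 2 m = padicValInt 2 n := by
  classical
  open SemidirectProduct Multiplicative Stmt6Aux in
  -- the composed surjection onto the concrete model
  set g : Amalgam m n →* K' := psi.comp f with hgdef
  have hg : Function.Surjective g := psi_surjective.comp hf
  set A : K' := g (Amalgam.a m n) with hAdef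
  set B : K' := g (Amalgam.b m n) with hBdef
  set c : ℤ := A.right.toAdd with hcdef
  set d : ℤ := B.right.toAdd with hddef
  -- the defining relation
  have hrel0 : (Amalgam.a m n) ^ m = (Amalgam.b m n) ^ n := by
    have hmem : ((FreeGroup.of true) ^ m * ((FreeGroup.of false) ^ n)⁻¹ : FreeGroup Bool) ∈
        Subgroup.normalClosure
          ({(FreeGroup.of true) ^ m * ((FreeGroup.of false) ^ n)⁻¹} : Set (FreeGroup Bool)) :=
      Subgroup.subset_normalClosure (Set.mem_singleton _)
    have h1 : PresentedGroup.mk _ ((FreeGroup.of true) ^ m * ((FreeGroup.of false) ^ n)⁻¹)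
        = (1 : Amalgam m n) := (QuotientGroup.eq_one_iff _).mpr hmem
    rw [map_mul, map_inv, map_zpow, map_zpow, mul_inv_eq_one] at h1
    exact h1
  have hAB : A ^ m = B ^ n := by
    rw [hAdef, hBdef, ← map_zpow, ← map_zpow, hrel0]
  -- second coordinates
  have hmc : m * c = n * d := by
    have h := congrArg (fun w : K' => (w.right).toAdd) hAB
    simpa only [right_zpow, toAdd_zpow, smul_eq_mul, mul_comm] using h
  -- generation
  have hTop : Subgroup.closure ({A, B} : Set K') = ⊤ := by
    have h1 : Subgroup.closure (Set.range (PresentedGroup.of : Bool → Amalgam m n)) = ⊤ :=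
      PresentedGroup.closure_range_of _
    have h2 : (Set.range (PresentedGroup.of : Bool → Amalgam m n))
        = {Amalgam.a m n, Amalgam.b m n} := by
      ext x
      constructor
      · rintro ⟨b, rfl⟩
        cases b
        · exact Or.inr rfl
        · exact Or.inl rfl
      · rintro (rfl | rfl)
        exacts [⟨true, rfl⟩, ⟨false, rfl⟩]
    have h3 : Subgroup.map g (Subgroup.closure {Amalgam.a m n, Amalgam.b m n}) = ⊤ := by
      rw [← h2, h1, ← MonoidHom.range_eq_map, MonoidHom.range_eq_top]
      exact hg
    rw [MonoidHom.map_closure, Set.image_pair] at h3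
    exact h3
  -- K' is nonabelian, so A and B do not commute
  have hNonAb : ¬ Commute A B := by
    intro hABc
    have hall : ∀ x y : K', Commute x y := by
      intro x y
      have hx : x ∈ Subgroup.closure ({A, B} : Set K') := hTop ▸ Subgroup.mem_top x
      have hy : y ∈ Subgroup.closure ({A, B} : Set K') := hTop ▸ Subgroup.mem_top y
      refine Subgroup.closure_induction₂ ?_ ?_ ?_ ?_ ?_ ?_ ?_ hx hy
      · rintro x y (rfl | rfl) (rfl | rfl)
        exacts [Commute.refl _, hABc, hABc.symm, Commute.refl _]
      · exact fun x _ => Commute.one_left x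
      · exact fun x _ => Commute.one_right x
      · exact fun x y z _ _ _ h1 h2 => h1.mul_left h2
      · exact fun y z x _ _ _ h1 h2 => h1.mul_right h2
      · exact fun x y _ _ h => h.inv_left
      · exact fun x y _ _ h => h.inv_right
    have hcontra := hall (inl (ofAdd 1)) (inr (ofAdd 1))
    have h1 : ((inl (ofAdd (1:ℤ)) * inr (ofAdd (1:ℤ)) : K')).left = ofAdd 1 := by simp
    have h2 : ((inr (ofAdd (1:ℤ)) * inl (ofAdd (1:ℤ)) : K')).left = ofAdd (-1) := by
      have hodd : Odd ((ofAdd (1:ℤ)).toAdd) := ⟨0, by simp⟩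
      simp [phiK_odd hodd]
    rw [Commute, SemiconjBy, ] at hcontra
    rw [hcontra] at h1
    rw [h2] at h1
    have := congrArg Multiplicative.toAdd h1
    simp at this
  -- parity: not both c and d even
  have hParity : ¬ (Even c ∧ Even d) := by
    rintro ⟨hc, hd⟩
    let χ : K' →* Multiplicative (ZMod 2) :=
      (AddMonoidHom.toMultiplicative (Int.castAddHom (ZMod 2))).comp
        (SemidirectProduct.rightHom)
    have hker : ∀ x : K', Even (x.right.toAdd) → χ x = 1 := by
      intro x hx
      show Multiplicative.ofAdd ((x.right.toAdd : ℤ) : ZMod 2) = 1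
      have : ((x.right.toAdd : ℤ) : ZMod 2) = 0 := by
        rw [ZMod.intCast_zmod_eq_zero_iff_dvd]
        exact hx.two_dvd
      rw [this]; rfl
    have hle : Subgroup.closure ({A, B} : Set K') ≤ χ.ker := by
      rw [Subgroup.closure_le]
      rintro x (rfl | rfl)
      · exact hker A hc
      · exact hker B hd
    rw [hTop] at hle
    have hU : χ (inr (ofAdd 1)) = 1 := hle (Subgroup.mem_top _)
    have : ((1 : ℤ) : ZMod 2) = 0 := by
      have := congrArg Multiplicative.toAdd hU
      simpa [χ] using this
    simpa using this
  rcases Int.even_or_odd c with hc | hc <;> rcases Int.even_or_odd d with hd | hd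
  · exact absurd ⟨hc, hd⟩ hParity
  · -- c even, d odd
    rcases Int.even_or_odd n with hn2 | hn2
    · -- n even : A is central, contradiction
      have hBn : B ^ n = inr (B.right ^ n) := zpow_even_of_odd_right hd hn2
      have hAm : A ^ m = inl (A.left ^ m) * inr (A.right ^ m) := zpow_of_even_right hc m
      have hleft : A.left ^ m = 1 := by
        have h := congrArg SemidirectProduct.left hAB
        rw [hAm, hBn] at h
        simpa only [mul_left, left_inl, right_inl, left_inr, map_one, MulAut.one_apply,
          mul_one] using h
      have hs : A.left = 1 := by
        have h := congrArg Multiplicative.toAdd hleft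
        rw [toAdd_zpow, smul_eq_mul] at h
        simp only [toAdd_one] at h
        rcases mul_eq_zero.mp h with h' | h'
        · exact absurd h' hm
        · rw [← ofAdd_toAdd A.left, h']; rfl
      have hA : A = inr A.right := by
        have h := inl_left_mul_inr_right A
        rw [hs, map_one, one_mul] at h
        exact h.symm
      have : Commute A B := by
        rw [hA, ← ofAdd_toAdd A.right]
        exact inr_central (by simpa only [toAdd_ofAdd] using hc) B
      exact (hNonAb this).elim
    · -- n odd : parity contradiction
      have h1 : Even (m * c) := hc.mul_left m
      rw [hmc] at h1
      exact ((Int.not_odd_iff_even.mpr h1) (hn2.mul hd)).elim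
  · -- c odd, d even (symmetric)
    rcases Int.even_or_odd m with hm2 | hm2
    · have hAm : A ^ m = inr (A.right ^ m) := zpow_even_of_odd_right hc hm2
      have hBn : B ^ n = inl (B.left ^ n) * inr (B.right ^ n) := zpow_of_even_right hd n
      have hleft : B.left ^ n = 1 := by
        have h := congrArg SemidirectProduct.left hAB
        rw [hAm, hBn] at h
        simpa only [mul_left, left_inl, right_inl, left_inr, map_one, MulAut.one_apply,
          mul_one] using h.symm
      have hs : B.left = 1 := by
        have h := congrArg Multiplicative.toAdd hleft
        rw [toAdd_zpow, smul_eq_mul] at h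
        simp only [toAdd_one] at h
        rcases mul_eq_zero.mp h with h' | h'
        · exact absurd h' hn
        · rw [← ofAdd_toAdd B.left, h']; rfl
      have hB : B = inr B.right := by
        have h := inl_left_mul_inr_right B
        rw [hs, map_one, one_mul] at h
        exact h.symm
      have : Commute B A := by
        rw [hB, ← ofAdd_toAdd B.right]
        exact inr_central (by simpa only [toAdd_ofAdd] using hd) A
      exact (hNonAb this.symm).elim
    · have h1 : Odd (m * c) := hm2.mul hc
      rw [hmc] at h1
      exact ((Int.not_odd_iff_even.mpr (hd.mul_left n)) h1).elim
  · -- c odd, d odd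
    rcases Int.even_or_odd m with hm2 | hm2
    · -- m even, n even : the desired conclusion
      have hn2 : Even n := by
        have h1 : Even (n * d) := by rw [← hmc]; exact hm2.mul_right c
        rcases Int.even_mul.mp h1 with h | h
        · exact h
        · exact absurd hd (Int.not_odd_iff_even.mpr h)
      have hc0 : c ≠ 0 := by
        intro h0
        rw [h0] at hc
        exact (Int.not_odd_iff_even.mpr Even.zero) hc
      have hd0 : d ≠ 0 := by
        intro h0
        rw [h0] at hd
        exact (Int.not_odd_iff_even.mpr Even.zero) hd
      have hvc : padicValInt 2 c = 0 := padicValInt.eq_zero_of_not_dvd (by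
        rintro ⟨k, hk⟩
        rcases hc with ⟨j, hj⟩
        omega)
      have hvd : padicValInt 2 d = 0 := padicValInt.eq_zero_of_not_dvd (by
        rintro ⟨k, hk⟩
        rcases hd with ⟨j, hj⟩
        omega)
      have e1 : padicValInt 2 (m * c) = padicValInt 2 m := by
        rw [padicValInt.mul hm hc0, hvc, add_zero]
      have e2 : padicValInt 2 (n * d) = padicValInt 2 n := by
        rw [padicValInt.mul hn hd0, hvd, add_zero]
      constructor
      · show 0 < padicValNat 2 m.natAbs
        exact one_le_padicValNat_of_dvd (Int.natAbs_ne_zero.mpr hm)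
          ((Int.natAbs_even.mpr hm2).two_dvd)
      · rw [← e1, hmc, e2]
    · -- m odd, n odd : contradiction
      have hn2 : Odd n := by
        have h1 : Odd (n * d) := hmc ▸ hm2.mul hc
        exact (Int.odd_mul.mp h1).1
      have hAl : (A ^ m).left = A.left := zpow_odd_left_of_odd_right hc hm2
      have hBl : (B ^ n).left = B.left := zpow_odd_left_of_odd_right hd hn2
      have hleq : A.left = B.left := by rw [← hAl, hAB, hBl]
      have hzeven : Even ((A.right * B.right⁻¹).toAdd) := by
        rw [toAdd_mul, toAdd_inv]
        exact hc.sub_odd hd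
      have hA : A = inr (A.right * B.right⁻¹) * B := by
        ext
        · simp [phiK_even hzeven, hleq]
        · simp
      have : Commute A B := by
        rw [hA]
        exact ((inr_central hzeven B).mul_left (Commute.refl B))
      exact (hNonAb this).elim
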